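/- Let γ be a Markov kernel family with the consistency property and suppose there exist a constant K > 0, a measurable set A, indices n ≤ p, and a fixed point σ such that γ_{[n,p]}(A|ξ) ≥ K·γ_{[n,p]}(A|η) for all ξ, η. Then for every k ≥ 0, the composed kernels satisfy γ_{[n,p+k]}(A|ξ) ≥ K²·γ_{[n,p+k]}(A|η) for all ξ, η, where γ_{[n,p+k]}(A|ξ) = ∫ γ_{[n,p]}(A|ω) γ_{[n,p+k]}(dω|ξ) by consistency. -/
import Mathlib


open MeasureTheory ProbabilityTheory ENNReal

theorem stmt19 {Ω : Type*} [MeasurableSpace Ω]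
    (κ : Kernel Ω Ω) (κ' : ℕ → Kernel Ω Ω)
    [IsMarkovKernel κ] (hmk : ∀ k, IsMarkovKernel (κ' k))
    (hcons : ∀ k, κ ∘ₖ (κ' k) = κ' k)
    (A : Set Ω) (hA : MeasurableSet A)
    (K : ℝ≥0∞) (hK : 0 < K)
    (hunif : ∀ ξ η : Ω, K * κ η A ≤ κ ξ A) :
    ∀ (k : ℕ) (ξ η : Ω), K ^ 2 * (κ' k) η A ≤ (κ' k) ξ A := by
  intro k ξ η
  haveI := hmk k
  have h1 : (κ' k) ξ A = ∫⁻ ω, κ ω A ∂((κ' k) ξ) := by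
    conv_lhs => rw [← hcons k]
    rw [Kernel.comp_apply' _ _ _ hA]
  have h2 : (κ' k) η A = ∫⁻ ω, κ ω A ∂((κ' k) η) := by
    conv_lhs => rw [← hcons k]
    rw [Kernel.comp_apply' _ _ _ hA]
  have hmeas : Measurable fun ω => κ ω A := Kernel.measurable_coe κ hA
  calc K ^ 2 * (κ' k) η A = K * (K * (κ' k) η A) := by ring
    _ ≤ K * κ ξ A := by
        gcongr
        rw [h2, ← MeasureTheory.lintegral_const_mul K hmeas]
        calc ∫⁻ ω, K * κ ω A ∂((κ' k) η) ≤ ∫⁻ _, κ ξ A ∂((κ' k) η) := by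
              exact lintegral_mono fun ω => hunif ξ ω
          _ = κ ξ A := by simp
    _ ≤ (κ' k) ξ A := by
        rw [h1]
        calc K * κ ξ A = ∫⁻ _, K * κ ξ A ∂((κ' k) ξ) := by simp
          _ ≤ ∫⁻ ω, κ ω A ∂((κ' k) ξ) := lintegral_mono fun ω => hunif ω ξ
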